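/- Let N = m·t and let (α_d)_{d ∈ ℕ} be the sequence defined by an initial value α_0 ∈ (0,1) and the EM update α_{d+1} = (1/N)·Σ_{i=1}^{t} Σ_{j=1}^{m} (α_d·k_{ij}/e_{i−1}) / ( α_d·k_{ij}/e_{i−1} + (1 − α_d)/n_{i−1} ). Then the sequence (α_d) converges. -/

import Mathlib

open Filter

/-- Monotonicity and bounds for a single EM term. -/
lemma em_term_denom_pos {a b x : ℝ} (ha : 0 < a) (hb : 0 < b)
    (hx0 : 0 ≤ x) (hx1 : x ≤ 1) : 0 < x * a + (1 - x) * b := by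
  rcases eq_or_lt_of_le hx0 with h | h
  · simp [← h]; linarith
  · have : 0 < x * a := mul_pos h ha
    nlinarith

lemma em_term_mem {a b x : ℝ} (ha : 0 < a) (hb : 0 < b)
    (hx0 : 0 ≤ x) (hx1 : x ≤ 1) :
    x * a / (x * a + (1 - x) * b) ∈ Set.Icc (0:ℝ) 1 := by
  have hd := em_term_denom_pos ha hb hx0 hx1
  constructor
  · positivity
  · rw [div_le_one hd]; nlinarith

lemma em_term_mono {a b x y : ℝ} (ha : 0 < a) (hb : 0 < b)
    (hx0 : 0 ≤ x) (hy1 : y ≤ 1) (hxy : x ≤ y) :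
    x * a / (x * a + (1 - x) * b) ≤ y * a / (y * a + (1 - y) * b) := by
  have hy0 : 0 ≤ y := le_trans hx0 hxy
  have hx1 : x ≤ 1 := le_trans hxy hy1
  have hdx := em_term_denom_pos ha hb hx0 hx1
  have hdy := em_term_denom_pos ha hb hy0 hy1
  rw [div_le_div_iff₀ hdx hdy]
  nlinarith [mul_pos ha hb]

/-- The EM iteration
`α_{d+1} = (1/N)·Σ_{i=1}^{t} Σ_{j=1}^{m} (α_d·k_{ij}/e_{i−1}) /
  (α_d·k_{ij}/e_{i−1} + (1 − α_d)/n_{i−1})`, `N = m·t`, started at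
`α_0 ∈ (0,1)`, produces a convergent sequence. -/
theorem em_iteration_converges
    (t m : ℕ) (ht : 1 ≤ t) (hm : 1 ≤ m)
    (k : ℕ → ℕ → ℕ)
    (hk : ∀ i ∈ Finset.Icc 1 t, ∀ j ∈ Finset.Icc 1 m, 0 < k i j)
    (n e : ℕ → ℕ)
    (hn : ∀ i ∈ Finset.Icc 1 t, 0 < n (i - 1))
    (he : ∀ i ∈ Finset.Icc 1 t, 0 < e (i - 1))
    (α : ℕ → ℝ) (hα0 : α 0 ∈ Set.Ioo (0 : ℝ) 1)
    (hrec : ∀ d : ℕ,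
      α (d + 1) = (1 / ((m : ℝ) * (t : ℝ))) *
        ∑ i ∈ Finset.Icc 1 t, ∑ j ∈ Finset.Icc 1 m,
          (α d * (k i j : ℝ) / (e (i - 1) : ℝ)) /
            (α d * (k i j : ℝ) / (e (i - 1) : ℝ) + (1 - α d) / (n (i - 1) : ℝ))) :
    ∃ L : ℝ, Tendsto α atTop (nhds L) := by
  -- rewrite each term in the form x*a/(x*a+(1-x)*b)
  set a : ℕ → ℕ → ℝ := fun i j => (k i j : ℝ) / (e (i - 1) : ℝ) with ha_def
  set b : ℕ → ℝ := fun i => 1 / (n (i - 1) : ℝ) with hb_def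
  have hapos : ∀ i ∈ Finset.Icc 1 t, ∀ j ∈ Finset.Icc 1 m, 0 < a i j := by
    intro i hi j hj
    have := hk i hi j hj
    have := he i hi
    have h1 : (0:ℝ) < (k i j : ℝ) := by exact_mod_cast hk i hi j hj
    have h2 : (0:ℝ) < (e (i-1) : ℝ) := by exact_mod_cast he i hi
    exact div_pos h1 h2
  have hbpos : ∀ i ∈ Finset.Icc 1 t, 0 < b i := by
    intro i hi
    have h2 : (0:ℝ) < (n (i-1) : ℝ) := by exact_mod_cast hn i hi
    exact div_pos one_pos h2
  have hrec' : ∀ d : ℕ,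
      α (d + 1) = (1 / ((m : ℝ) * (t : ℝ))) *
        ∑ i ∈ Finset.Icc 1 t, ∑ j ∈ Finset.Icc 1 m,
          α d * a i j / (α d * a i j + (1 - α d) * b i) := by
    intro d
    rw [hrec d]
    congr 1
    refine Finset.sum_congr rfl fun i hi => Finset.sum_congr rfl fun j hj => ?_
    simp only [ha_def, hb_def]
    ring_nf
  have hNpos : (0:ℝ) < (m : ℝ) * (t : ℝ) := by
    have h1 : (0:ℝ) < (m:ℝ) := by exact_mod_cast hm
    have h2 : (0:ℝ) < (t:ℝ) := by exact_mod_cast ht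
    exact mul_pos h1 h2
  -- all iterates stay in [0,1]
  have hmem : ∀ d, α d ∈ Set.Icc (0:ℝ) 1 := by
    intro d
    induction d with
    | zero => exact ⟨hα0.1.le, hα0.2.le⟩
    | succ d ih =>
      rw [hrec' d]
      have hcard : ((Finset.Icc 1 t).card : ℝ) * ((Finset.Icc 1 m).card : ℝ)
          = (t : ℝ) * (m : ℝ) := by
        simp [Nat.card_Icc]
      constructor
      · have : (0:ℝ) ≤ ∑ i ∈ Finset.Icc 1 t, ∑ j ∈ Finset.Icc 1 m,
            α d * a i j / (α d * a i j + (1 - α d) * b i) := by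
          apply Finset.sum_nonneg; intro i hi
          apply Finset.sum_nonneg; intro j hj
          exact (em_term_mem (hapos i hi j hj) (hbpos i hi) ih.1 ih.2).1
        positivity
      · rw [one_div, inv_mul_le_iff₀ hNpos, mul_one]
        calc ∑ i ∈ Finset.Icc 1 t, ∑ j ∈ Finset.Icc 1 m,
              α d * a i j / (α d * a i j + (1 - α d) * b i)
            ≤ ∑ i ∈ Finset.Icc 1 t, ∑ j ∈ Finset.Icc 1 m, (1:ℝ) := by
              apply Finset.sum_le_sum; intro i hi
              apply Finset.sum_le_sum; intro j hj
              exact (em_term_mem (hapos i hi j hj) (hbpos i hi) ih.1 ih.2).2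
          _ = (t : ℝ) * (m : ℝ) := by simp [Nat.card_Icc]
          _ = (m : ℝ) * (t : ℝ) := by ring
  -- the iteration map is monotone on [0,1] along the orbit
  have hstep : ∀ c d : ℕ, α c ≤ α d → α (c+1) ≤ α (d+1) := by
    intro c d hcd
    rw [hrec' c, hrec' d]
    apply mul_le_mul_of_nonneg_left _ (by positivity)
    apply Finset.sum_le_sum; intro i hi
    apply Finset.sum_le_sum; intro j hj
    exact em_term_mono (hapos i hi j hj) (hbpos i hi) (hmem c).1 (hmem d).2 hcd
  rcases le_total (α 0) (α 1) with h01 | h01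
  · have hmono : Monotone α := by
      apply monotone_nat_of_le_succ
      intro d
      induction d with
      | zero => exact h01
      | succ d ih => exact hstep d (d+1) ih
    exact ⟨_, tendsto_atTop_ciSup hmono ⟨1, fun x ⟨d, hd⟩ => hd ▸ (hmem d).2⟩⟩
  · have hanti : Antitone α := by
      apply antitone_nat_of_succ_le
      intro d
      induction d with
      | zero => exact h01
      | succ d ih => exact hstep (d+1) d ih
    exact ⟨_, tendsto_atTop_ciInf hanti ⟨0, fun x ⟨d, hd⟩ => hd ▸ (hmem d).1⟩⟩
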